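/- Let σ : Σ → Σ' be an injective signature morphism, SP = ⟨Σ, Φ⟩ a flat specification, SP' a specification over Σ', and τ the translation induced by σ (τ(t ≈ t') = { σ(t) ≈ σ(t') }). Then SP ⇝_σ SP' if and only if SP ⇀_τ SP'. -/

import Mathlib

open FirstOrder

/-- A single-sorted algebraic signature, i.e. a first-order language
(used with no relation symbols). -/
abbrev Signature : Type 1 := FirstOrder.Language.{0,0}

/-- An equation over a signature `L`: a pair of terms with variables in `ℕ`. -/
abbrev Eqn (L : Signature) : Type := L.Term ℕ × L.Term ℕ

/-- A conditional equation: a finite set of premise equations and a conclusion equation. -/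
abbrev CondEqn (L : Signature) : Type := Finset (Eqn L) × Eqn L

/-- An algebra for the signature `L`: a structure with nonempty carrier
(in a fixed universe). -/
structure Alg (L : Signature) : Type 1 where
  carrier : Type
  [str : L.Structure carrier]
  [nonempty : Nonempty carrier]

attribute [instance] Alg.str Alg.nonempty

/-- An assignment satisfies an equation. -/
def Alg.SatEq {L : Signature} (A : Alg L) (h : ℕ → A.carrier) (e : Eqn L) : Prop :=
  e.1.realize h = e.2.realize h

/-- An algebra satisfies a conditional equation. -/
def Alg.Sat {L : Signature} (A : Alg L) (ξ : CondEqn L) : Prop :=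
  ∀ h : ℕ → A.carrier, (∀ e ∈ ξ.1, A.SatEq h e) → A.SatEq h ξ.2

/-- A class of algebras satisfies a conditional equation. -/
def ClassSat {L : Signature} (K : Set (Alg L)) (ξ : CondEqn L) : Prop :=
  ∀ A ∈ K, A.Sat ξ

/-- The class of algebras denoted by a flat specification with axioms `Φ`. -/
def FlatMod {L : Signature} (Φ : Set (CondEqn L)) : Set (Alg L) :=
  {A | ∀ ξ ∈ Φ, A.Sat ξ}

/-- Extension of a translation on equations to conditional equations:
`τ⟨Γ, e⟩ = { ⟨⋃_{e₀ ∈ Γ} τ(e₀), e'⟩ : e' ∈ τ(e) }`. -/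
noncomputable def trCE {L L' : Signature} (τ : Eqn L → Finset (Eqn L'))
    (ξ : CondEqn L) : Finset (CondEqn L') :=
  letI := Classical.decEq (Eqn L')
  letI := Classical.decEq (CondEqn L')
  (τ ξ.2).image (fun e' => (ξ.1.biUnion τ, e'))

/-- `τ` interprets the specification (with model class `SP`) in the class `K`. -/
def InterpretsIn {L L' : Signature} (τ : Eqn L → Finset (Eqn L'))
    (SP : Set (Alg L)) (K : Set (Alg L')) : Prop :=
  ∀ ξ : CondEqn L, ClassSat SP ξ ↔ ∀ η ∈ trCE τ ξ, ClassSat K η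

/-- `τ` interprets the specification with model class `SP`. -/
def Interprets {L L' : Signature} (τ : Eqn L → Finset (Eqn L'))
    (SP : Set (Alg L)) : Prop :=
  ∃ K : Set (Alg L'), InterpretsIn τ SP K

/-- A `τ`-model of the specification with model class `SP`. -/
def IsTauModel {L L' : Signature} (τ : Eqn L → Finset (Eqn L'))
    (SP : Set (Alg L)) (A' : Alg L') : Prop :=
  ∀ ξ : CondEqn L, ClassSat SP ξ → ∀ η ∈ trCE τ ξ, A'.Sat η

/-- The class of all `τ`-models of `SP`. -/
def ModTau {L L' : Signature} (τ : Eqn L → Finset (Eqn L'))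
    (SP : Set (Alg L)) : Set (Alg L') :=
  {A' | IsTauModel τ SP A'}

/-- `SP'` refines `SP` by the interpretation `τ`. -/
def Refines {L L' : Signature} (τ : Eqn L → Finset (Eqn L'))
    (SP : Set (Alg L)) (SP' : Set (Alg L')) : Prop :=
  ∀ ξ : CondEqn L, ClassSat SP ξ → ∀ η ∈ trCE τ ξ, ClassSat SP' η

/-- Application of a substitution to an equation. -/
def substEq {L : Signature} (σ : ℕ → L.Term ℕ) (e : Eqn L) : Eqn L :=
  (e.1.subst σ, e.2.subst σ)

/-- The extension of a signature morphism (with variable map `v`) to terms. -/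
def mapTerm {L L' : Signature} (σ : L →ᴸ L') (v : ℕ → ℕ) : L.Term ℕ → L'.Term ℕ
  | .var x => .var (v x)
  | .func f ts => .func (σ.onFunction f) (fun i => mapTerm σ v (ts i))

/-- The extension of a signature morphism to equations. -/
def mapEq {L L' : Signature} (σ : L →ᴸ L') (v : ℕ → ℕ) (e : Eqn L) : Eqn L' :=
  (mapTerm σ v e.1, mapTerm σ v e.2)

/-- The extension of a signature morphism to conditional equations. -/
noncomputable def mapCE {L L' : Signature} (σ : L →ᴸ L') (v : ℕ → ℕ)
    (ξ : CondEqn L) : CondEqn L' :=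
  letI := Classical.decEq (Eqn L')
  (ξ.1.image (mapEq σ v), mapEq σ v ξ.2)

/-- The σ-reduct of an algebra along a signature morphism. -/
def Alg.reduct {L L' : Signature} (σ : L →ᴸ L') (A' : Alg L') : Alg L :=
  { carrier := A'.carrier, str := σ.reduct A'.carrier, nonempty := A'.nonempty }

/-- The composite of two translations on equations: `(ρ∘τ)(e) = ⋃_{e' ∈ τ(e)} ρ(e')`. -/
noncomputable def trCompEq {L L' L'' : Signature} (τ : Eqn L → Finset (Eqn L'))
    (ρ : Eqn L' → Finset (Eqn L'')) (e : Eqn L) : Finset (Eqn L'') :=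
  letI := Classical.decEq (Eqn L'')
  (τ e).biUnion ρ

section Aux

variable {L L' : Signature} (σ : L →ᴸ L') (v : ℕ → ℕ)

lemma realize_mapTerm (A' : Alg L') (h : ℕ → A'.carrier) (t : L.Term ℕ) :
    Language.Term.realize h (mapTerm σ v t)
      = Language.Term.realize (M := (Alg.reduct σ A').carrier) (fun x => h (v x)) t := by
  induction t with
  | var x => rfl
  | func f ts ih =>
    show Language.Structure.funMap (σ.onFunction f) _ = _
    simp only [mapTerm, Language.Term.realize, ih]
    rfl

lemma satEq_mapEq (A' : Alg L') (h : ℕ → A'.carrier) (e : Eqn L) :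
    A'.SatEq h (mapEq σ v e) ↔ (Alg.reduct σ A').SatEq (fun x => h (v x)) e := by
  simp only [Alg.SatEq, mapEq, realize_mapTerm]
  exact Iff.rfl

lemma mem_mapCE_fst {e' : Eqn L'} {ξ : CondEqn L} :
    e' ∈ (mapCE σ v ξ).1 ↔ ∃ e ∈ ξ.1, mapEq σ v e = e' := by
  classical
  simp [mapCE]

lemma sat_mapCE_iff (hv : Function.Injective v) (A' : Alg L') (ξ : CondEqn L) :
    A'.Sat (mapCE σ v ξ) ↔ (Alg.reduct σ A').Sat ξ := by
  constructor
  · intro hs h hprem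
    classical
    set h' : ℕ → A'.carrier := fun y =>
      if hy : ∃ x, v x = y then h hy.choose else h 0 with hh'
    have hcomp : ∀ x, h' (v x) = h x := by
      intro x
      have hy : ∃ x', v x' = v x := ⟨x, rfl⟩
      simp only [hh', dif_pos hy]
      have := hy.choose_spec
      exact (dif_pos hy).trans (congrArg h (hv this))
    have hext : (fun x => h' (v x)) = h := funext hcomp
    have := hs h' ?_
    · have := (satEq_mapEq σ v A' h' ξ.2).1 this
      rwa [hext] at this
    · intro e' he'
      rcases (mem_mapCE_fst σ v).1 he' with ⟨e, he, rfl⟩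
      rw [satEq_mapEq σ v A' h' e, hext]
      exact hprem e he
  · intro hs h' hprem
    show A'.SatEq h' (mapEq σ v ξ.2)
    rw [satEq_mapEq]
    apply hs
    intro e he
    rw [← satEq_mapEq σ v A' h' e]
    exact hprem (mapEq σ v e) ((mem_mapCE_fst σ v).2 ⟨e, he, rfl⟩)

lemma mem_trCE_iff (ξ : CondEqn L) (η : CondEqn L') :
    η ∈ trCE (fun e => ({mapEq σ v e} : Finset (Eqn L'))) ξ ↔ η = mapCE σ v ξ := by
  classical
  have hbu : @Finset.biUnion _ _ (Classical.decEq (Eqn L')) ξ.1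
        (fun e => ({mapEq σ v e} : Finset (Eqn L')))
      = @Finset.image _ _ (Classical.decEq (Eqn L')) (mapEq σ v) ξ.1 := by
    ext e'
    simp [eq_comm]
  simp only [trCE, mapCE, hbu, Finset.mem_image, Finset.mem_singleton]
  constructor
  · rintro ⟨e', rfl, rfl⟩
    rfl
  · rintro rfl
    exact ⟨mapEq σ v ξ.2, rfl, rfl⟩

/-- Expansion of an `L`-algebra to an `L'`-algebra along `σ`, interpreting
symbols in the image of `σ` as before and all other symbols trivially. -/
noncomputable def expandFun (A : Alg L) {n : ℕ} (g : L'.Functions n)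
    (xs : Fin n → A.carrier) : A.carrier :=
  letI := Classical.propDecidable (∃ f : L.Functions n, σ.onFunction f = g)
  if hg : ∃ f : L.Functions n, σ.onFunction f = g then
    Language.Structure.funMap hg.choose xs
  else Classical.arbitrary A.carrier

noncomputable def expand (A : Alg L) : Alg L' where
  carrier := A.carrier
  str :=
    { funMap := fun {n} g xs => expandFun σ A g xs
      RelMap := fun _ _ => True }
  nonempty := A.nonempty

lemma expand_funMap (hinj : ∀ n, Function.Injective fun f : L.Functions n => σ.onFunction f)
    (A : Alg L) {n : ℕ} (f : L.Functions n) (xs : Fin n → A.carrier) :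
    Language.Structure.funMap (M := (expand σ A).carrier) (σ.onFunction f) xs
      = Language.Structure.funMap (M := A.carrier) f xs := by
  have hg : ∃ f' : L.Functions n, σ.onFunction f' = σ.onFunction f := ⟨f, rfl⟩
  show expandFun σ A (σ.onFunction f) xs = _
  unfold expandFun
  rw [dif_pos hg]
  have : hg.choose = f := hinj n hg.choose_spec
  rw [this]

lemma realize_reduct_expand
    (hinj : ∀ n, Function.Injective fun f : L.Functions n => σ.onFunction f)
    (A : Alg L) (h : ℕ → A.carrier) (t : L.Term ℕ) :
    Language.Term.realize (M := (Alg.reduct σ (expand σ A)).carrier) h t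
      = Language.Term.realize (M := A.carrier) h t := by
  induction t with
  | var x => rfl
  | func f ts ih =>
    have h1 := expand_funMap σ hinj A f
      (fun i => Language.Term.realize (M := (Alg.reduct σ (expand σ A)).carrier) h (ts i))
    exact h1.trans (congrArg _ (funext ih))

lemma sat_reduct_expand_iff
    (hinj : ∀ n, Function.Injective fun f : L.Functions n => σ.onFunction f)
    (A : Alg L) (ξ : CondEqn L) :
    (Alg.reduct σ (expand σ A)).Sat ξ ↔ A.Sat ξ := by
  have hse : ∀ (h : ℕ → A.carrier) (e : Eqn L),
      (Alg.reduct σ (expand σ A)).SatEq h e ↔ A.SatEq h e := by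
    intro h e
    simp only [Alg.SatEq, realize_reduct_expand σ hinj]
    exact Iff.rfl
  constructor
  · intro hs h hprem
    exact (hse h ξ.2).1 (hs h fun e he => (hse h e).2 (hprem e he))
  · intro hs h hprem
    exact (hse h ξ.2).2 (hs h fun e he => (hse h e).1 (hprem e he))

end Aux

/-- for an injective signature morphism `σ` with induced translation `τ`
and a flat specification `SP = ⟨Σ, Φ⟩`, `SP ⇝_σ SP'` iff `SP ⇀_τ SP'`. -/
theorem sigma_refinement_iff_refinement_by_interpretation {L L' : Signature}
    (_hL : L.IsAlgebraic) (_hL' : L'.IsAlgebraic)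
    (σ : L →ᴸ L') (v : ℕ → ℕ) (hv : Function.Injective v)
    (hinj : ∀ n, Function.Injective fun f : L.Functions n => σ.onFunction f)
    (Φ : Set (CondEqn L)) (SP' : Set (Alg L')) :
    (∀ A' ∈ SP', Alg.reduct σ A' ∈ FlatMod Φ) ↔
      (Interprets (fun e => ({mapEq σ v e} : Finset (Eqn L'))) (FlatMod Φ) ∧
        Refines (fun e => ({mapEq σ v e} : Finset (Eqn L'))) (FlatMod Φ) SP') := by
  constructor
  · intro href
    constructor
    · refine ⟨{A' | Alg.reduct σ A' ∈ FlatMod Φ}, fun ξ => ⟨?_, ?_⟩⟩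
      · intro hsat η hη A' hA'
        rw [mem_trCE_iff] at hη
        subst hη
        exact (sat_mapCE_iff σ v hv A' ξ).2 (hsat _ hA')
      · intro hK A hA
        have hmem : expand σ A ∈ {A' : Alg L' | Alg.reduct σ A' ∈ FlatMod Φ} := by
          intro ζ hζ
          exact (sat_reduct_expand_iff σ hinj A ζ).2 (hA ζ hζ)
        have := hK (mapCE σ v ξ) ((mem_trCE_iff σ v ξ _).2 rfl) _ hmem
        exact (sat_reduct_expand_iff σ hinj A ξ).1
          ((sat_mapCE_iff σ v hv (expand σ A) ξ).1 this)
    · intro ξ hsat η hη A' hA'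
      rw [mem_trCE_iff] at hη
      subst hη
      exact (sat_mapCE_iff σ v hv A' ξ).2 (hsat _ (href A' hA'))
  · rintro ⟨-, href⟩ A' hA' ξ hξ
    have hsat : ClassSat (FlatMod Φ) ξ := fun A hA => hA ξ hξ
    have := href ξ hsat (mapCE σ v ξ) ((mem_trCE_iff σ v ξ _).2 rfl) A' hA'
    exact (sat_mapCE_iff σ v hv A' ξ).1 this
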